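/- For every integer n ≥ 1, the strength of the odd cycle C_{2n+1} satisfies str(C_{2n+1}) = 2n + 3. -/

import Mathlib

open SimpleGraph

/-- The strength of a numbering `f` of a graph `G` on `Fin n`: the maximum value of
`(f u + 1) + (f v + 1)` over edges `uv` of `G` (labels are the 1-based values `f · + 1`). -/
noncomputable def strOf {n : ℕ} (G : SimpleGraph (Fin n)) (f : Fin n ≃ Fin n) : ℕ :=
  sSup {s | ∃ u v, G.Adj u v ∧ s = ((f u : ℕ) + 1) + ((f v : ℕ) + 1)}

/-- The strength of a graph `G` on `Fin n`: the minimum over all numberings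
(bijections `Fin n ≃ Fin n`) of the maximum edge label. -/
noncomputable def str {n : ℕ} (G : SimpleGraph (Fin n)) : ℕ :=
  sInf {s | ∃ f : Fin n ≃ Fin n, s = strOf G f}

/-- The domination number: minimum size of a set `S` such that every vertex not
in `S` is adjacent to some vertex of `S`. -/
noncomputable def dominationNumber {n : ℕ} (G : SimpleGraph (Fin n)) : ℕ :=
  sInf {k | ∃ S : Finset (Fin n), (∀ v ∉ S, ∃ u ∈ S, G.Adj u v) ∧ S.card = k}

/-- The independence number: maximum size of a set of pairwise non-adjacent vertices. -/
noncomputable def indepNumber {n : ℕ} (G : SimpleGraph (Fin n)) : ℕ :=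
  sSup {k | ∃ S : Finset (Fin n), (∀ u ∈ S, ∀ v ∈ S, u ≠ v → ¬ G.Adj u v) ∧ S.card = k}

/-- The vertex covering number: minimum size of a set of vertices meeting every edge. -/
noncomputable def vertexCoverNumber {n : ℕ} (G : SimpleGraph (Fin n)) : ℕ :=
  sInf {k | ∃ S : Finset (Fin n), (∀ u v, G.Adj u v → u ∈ S ∨ v ∈ S) ∧ S.card = k}

/-- The edge covering number: minimum size of a set of edges covering every vertex. -/
noncomputable def edgeCoverNumber {n : ℕ} (G : SimpleGraph (Fin n)) : ℕ :=
  sInf {k | ∃ E : Finset (Sym2 (Fin n)),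
    (∀ e ∈ E, e ∈ G.edgeSet) ∧ (∀ v : Fin n, ∃ e ∈ E, v ∈ e) ∧ E.card = k}

/-- The matching (edge independence) number: maximum size of a set of pairwise
non-incident edges. -/
noncomputable def matchingNumber {n : ℕ} (G : SimpleGraph (Fin n)) : ℕ :=
  sSup {k | ∃ M : Finset (Sym2 (Fin n)),
    (∀ e ∈ M, e ∈ G.edgeSet) ∧
    (∀ e ∈ M, ∀ e' ∈ M, e ≠ e' → ∀ v : Fin n, v ∈ e → v ∉ e') ∧ M.card = k}

/-- The graph `F_k` on vertices `v_1, …, v_k` (here `v_i` is `⟨i-1, _⟩ : Fin k`), with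
`v_i` adjacent to `v_j` iff `1 ≤ i ≤ ⌊k/2⌋` and `i + 1 ≤ j ≤ k + 1 - i`. -/
noncomputable def Fgraph (k : ℕ) : SimpleGraph (Fin k) :=
  SimpleGraph.fromRel (fun a b =>
    (a : ℕ) + 1 ≤ k / 2 ∧ (a : ℕ) + 2 ≤ (b : ℕ) + 1 ∧ (b : ℕ) + 1 ≤ k + 1 - ((a : ℕ) + 1))

/-- `G` contains `F_k` as a subgraph: there is an injective graph homomorphism
from `F_k` into `G`. -/
noncomputable def ContainsF {n : ℕ} (G : SimpleGraph (Fin n)) (k : ℕ) : Prop :=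
  ∃ φ : Fgraph k →g G, Function.Injective φ


lemma cycle_adj_val {m : ℕ} (hm : 3 ≤ m) {u v : Fin m} :
    (cycleGraph m).Adj u v ↔
      (u.val + 1 = v.val ∨ v.val + 1 = u.val ∨
       (u.val = 0 ∧ v.val = m - 1) ∨ (v.val = 0 ∧ u.val = m - 1)) := by
  rw [cycleGraph_adj']
  have key : ∀ a b : Fin m, (a - b).val = 1 ↔ (b.val + 1 = a.val ∨ (a.val = 0 ∧ b.val = m - 1)) := by
    intro a b
    have ha := a.isLt; have hb := b.isLt
    rw [Fin.sub_def]
    simp only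
    rcases le_or_gt b.val a.val with h | h
    · have he : m - b.val + a.val = (a.val - b.val) + m := by omega
      rw [he, Nat.add_mod_right, Nat.mod_eq_of_lt (by omega)]
      omega
    · rw [Nat.mod_eq_of_lt (by omega)]
      omega
  rw [key, key]
  have ha := u.isLt; have hb := v.isLt
  omega

lemma adj_succ {m : ℕ} [NeZero m] (hm : 3 ≤ m) (u : Fin m) : (cycleGraph m).Adj u (u + 1) := by
  have hu := u.isLt
  have h1 : (u + 1).val = (u.val + 1) % m := by
    rw [Fin.add_def, Fin.val_one', Nat.mod_eq_of_lt (show 1 < m by omega)]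
  rw [cycle_adj_val hm]
  rcases Nat.lt_or_ge (u.val + 1) m with h | h
  · rw [Nat.mod_eq_of_lt h] at h1; omega
  · rw [(by omega : u.val + 1 = m), Nat.mod_self] at h1; omega

lemma indep_card_le {n : ℕ} (hn : 1 ≤ n) (S : Finset (Fin (2*n+1)))
    (hS : ∀ u ∈ S, ∀ v ∈ S, u ≠ v → ¬ (cycleGraph (2*n+1)).Adj u v) :
    S.card ≤ n := by
  haveI : NeZero (2*n+1) := ⟨by omega⟩
  have hm : 3 ≤ 2*n+1 := by omega
  have hinj : Function.Injective (fun v : Fin (2*n+1) => v + 1) := add_left_injective 1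
  have hdisj : Disjoint S (S.image (fun v => v + 1)) := by
    rw [Finset.disjoint_left]
    intro v hv hv'
    obtain ⟨u, hu, rfl⟩ := Finset.mem_image.mp hv'
    have hadj := adj_succ hm u
    have hne : u ≠ u + 1 := fun h => (cycleGraph (2*n+1)).loopless.irrefl (u+1) (h ▸ hadj)
    exact hS u hu (u+1) hv hne hadj
  have hcard : (S.image (fun v => v + 1)).card = S.card :=
    Finset.card_image_of_injective _ hinj
  have hun := Finset.card_le_univ (S ∪ S.image (fun v => v + 1))
  rw [Finset.card_union_of_disjoint hdisj, hcard] at hun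
  simp [Fintype.card_fin] at hun
  omega

def f0 (n : ℕ) : Fin (2*n+1) ≃ Fin (2*n+1) where
  toFun i := ⟨if i.val % 2 = 0 then i.val / 2 else 2*n - i.val / 2,
    by have := i.isLt; split <;> omega⟩
  invFun j := ⟨if j.val ≤ n then 2 * j.val else 2*(2*n - j.val) + 1,
    by have := j.isLt; split <;> omega⟩
  left_inv i := by
    have := i.isLt
    apply Fin.ext
    simp only
    split_ifs <;> omega
  right_inv j := by
    have := j.isLt
    apply Fin.ext
    simp only
    split_ifs <;> omega

lemma f0_val (n : ℕ) (i : Fin (2*n+1)) :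
    (f0 n i : ℕ) = if i.val % 2 = 0 then i.val / 2 else 2*n - i.val / 2 := rfl

/-- For every `n ≥ 1`, `str(C_{2n+1}) = 2n + 3`. -/
theorem strength_oddCycle (n : ℕ) (hn : 1 ≤ n) :
    str (SimpleGraph.cycleGraph (2 * n + 1)) = 2 * n + 3 := by
  haveI : NeZero (2*n+1) := ⟨by omega⟩
  have hm : 3 ≤ 2*n+1 := by omega
  set G := cycleGraph (2*n+1) with hG
  have hne : ∀ f : Fin (2*n+1) ≃ Fin (2*n+1),
      {s | ∃ u v, G.Adj u v ∧ s = ((f u : ℕ) + 1) + ((f v : ℕ) + 1)}.Nonempty :=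
    fun f => ⟨_, ⟨0, 0+1, adj_succ hm 0, rfl⟩⟩
  have hbdd : ∀ f : Fin (2*n+1) ≃ Fin (2*n+1),
      BddAbove {s | ∃ u v, G.Adj u v ∧ s = ((f u : ℕ) + 1) + ((f v : ℕ) + 1)} := by
    intro f
    refine ⟨4*n+4, ?_⟩
    rintro s ⟨u, v, _, rfl⟩
    have := (f u).isLt; have := (f v).isLt
    omega
  have hlow : ∀ f : Fin (2*n+1) ≃ Fin (2*n+1), 2*n+3 ≤ strOf G f := by
    intro f
    by_contra hcon
    push_neg at hcon
    unfold strOf at hcon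
    have hle : ∀ u v, G.Adj u v → ((f u : ℕ)+1) + ((f v : ℕ)+1) ≤ 2*n+2 := by
      intro u v huv
      have h := le_csSup (hbdd f) (show _ ∈ _ from ⟨u, v, huv, rfl⟩)
      omega
    set S := Finset.univ.filter (fun v : Fin (2*n+1) => n ≤ (f v : ℕ)) with hSdef
    have himg : S.image f = Finset.univ.filter (fun j : Fin (2*n+1) => n ≤ (j : ℕ)) := by
      ext j
      simp only [hSdef, Finset.mem_image, Finset.mem_filter, Finset.mem_univ, true_and]
      constructor
      · rintro ⟨v, hv, rfl⟩; exact hv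
      · intro hj; exact ⟨f.symm j, by simpa using hj, f.apply_symm_apply j⟩
    have hIci : Finset.univ.filter (fun j : Fin (2*n+1) => n ≤ (j : ℕ))
        = Finset.Ici (⟨n, by omega⟩ : Fin (2*n+1)) := by
      ext j; simp [Fin.le_def]
    have hScard : S.card = n + 1 := by
      rw [← Finset.card_image_of_injective S f.injective, himg, hIci, Fin.card_Ici]
      simp only [Fin.val_mk]
      omega
    have hindep : ∀ u ∈ S, ∀ v ∈ S, u ≠ v → ¬ G.Adj u v := by
      intro u hu v hv huv hadj
      simp only [hSdef, Finset.mem_filter, Finset.mem_univ, true_and] at hu hv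
      have hfne : (f u : ℕ) ≠ (f v : ℕ) :=
        fun h => huv (f.injective (Fin.val_injective h))
      have := hle u v hadj
      omega
    have := indep_card_le hn S hindep
    omega
  have hup : strOf G (f0 n) ≤ 2*n+3 := by
    unfold strOf
    apply csSup_le (hne (f0 n))
    rintro s ⟨u, v, huv, rfl⟩
    rw [hG, cycle_adj_val hm] at huv
    have hu := u.isLt; have hv := v.isLt
    rw [f0_val, f0_val]
    split_ifs <;> omega
  have h1 : str G ≤ strOf G (f0 n) := by
    unfold str
    exact Nat.sInf_le ⟨f0 n, rfl⟩
  have h2 : 2*n+3 ≤ str G := by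
    unfold str
    have hmem : strOf G (f0 n) ∈ {s | ∃ f : Fin (2*n+1) ≃ Fin (2*n+1), s = strOf G f} :=
      ⟨f0 n, rfl⟩
    apply le_csInf ⟨_, hmem⟩
    rintro s ⟨f, rfl⟩
    exact hlow f
  omega
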